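/- Let G be a group acting on a set M and let H be a finite subgroup of G which is the unique maximal stationary subgroup of the action up to conjugation. If l, g ∈ G satisfy M^{lHl⁻¹} ∩ M^{gHg⁻¹} ≠ ∅, then lHl⁻¹ = gHg⁻¹, and this holds if and only if g⁻¹l ∈ N(H), i.e. l and g define the same coset in G/N(H). Hence the assignment [g] ↦ M^{gHg⁻¹} is a well-defined injection from the set of cosets {[g] ∈ G/N(H) | M^{gHg⁻¹} ≠ ∅} to the set of nonempty fixed-point sets of conjugates of H, with pairwise disjoint images. -/

import Mathlib

/-- The fixed-point set `M^K` of a subgroup `K` acting on `M`. -/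
def fixedPts {G : Type*} [Group G] (M : Type*) [MulAction G M] (K : Subgroup G) : Set M :=
  {x : M | ∀ k ∈ K, k • x = x}

/-- The conjugate subgroup `gHg⁻¹`. -/
def conjSubgroup {G : Type*} [Group G] (g : G) (H : Subgroup G) : Subgroup G :=
  Subgroup.map (MulAut.conj g).toMonoidHom H

/-- `H` is the unique, up to conjugation, maximal stationary subgroup of the action of `G`
on `M`: `H` is finite and every subgroup with nonempty fixed-point set is contained in
some conjugate of `H`. -/
def UniqueMaxStationary {G : Type*} [Group G] (M : Type*) [MulAction G M]
    (H : Subgroup G) : Prop :=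
  Finite H ∧ ∀ K : Subgroup G, (fixedPts M K).Nonempty → ∃ l : G, K ≤ conjSubgroup l H

lemma mem_conjSubgroup {G : Type*} [Group G] (g x : G) (H : Subgroup G) :
    x ∈ conjSubgroup g H ↔ g⁻¹ * x * g ∈ H := by
  simp only [conjSubgroup, Subgroup.mem_map, MulEquiv.coe_toMonoidHom, MulAut.conj_apply]
  constructor
  · rintro ⟨h, hh, rfl⟩
    simpa [mul_assoc] using hh
  · intro hx
    exact ⟨g⁻¹ * x * g, hx, by group⟩

lemma conjSubgroup_conjSubgroup {G : Type*} [Group G] (a b : G) (H : Subgroup G) :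
    conjSubgroup a (conjSubgroup b H) = conjSubgroup (a * b) H := by
  ext x
  rw [mem_conjSubgroup, mem_conjSubgroup, mem_conjSubgroup,
    show b⁻¹ * (a⁻¹ * x * a) * b = (a * b)⁻¹ * x * (a * b) by group]

lemma conjSubgroup_one {G : Type*} [Group G] (H : Subgroup G) :
    conjSubgroup 1 H = H := by
  ext x; simp [mem_conjSubgroup]

lemma card_conjSubgroup {G : Type*} [Group G] (g : G) (H : Subgroup G) :
    Nat.card (conjSubgroup g H) = Nat.card H := by
  exact (Nat.card_congr (H.equivMapOfInjective _ (MulAut.conj g).injective).toEquiv).symm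

/-- A conjugate of a finite subgroup contained in it equals it. -/
lemma conj_le_self_eq {G : Type*} [Group G] (H : Subgroup G) [Finite H] (a : G)
    (h : conjSubgroup a H ≤ H) : conjSubgroup a H = H :=
  Subgroup.eq_of_le_of_card_ge h (by rw [card_conjSubgroup])

lemma conjSubgroup_eq_self_iff {G : Type*} [Group G] (H : Subgroup G) (a : G) :
    conjSubgroup a H = H ↔ a ∈ Subgroup.normalizer (H : Set G) := by
  rw [Subgroup.mem_normalizer_iff]
  constructor
  · intro h n
    conv_rhs => rw [← h, mem_conjSubgroup, show a⁻¹ * (a * n * a⁻¹) * a = n by group]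
  · intro h
    ext x
    rw [mem_conjSubgroup, h (a⁻¹ * x * a), show a * (a⁻¹ * x * a) * a⁻¹ = x by group]

/-- If `H` is the unique maximal stationary subgroup up to conjugation, then
`M^{lHl⁻¹} ∩ M^{gHg⁻¹} ≠ ∅` forces `lHl⁻¹ = gHg⁻¹`; moreover `lHl⁻¹ = gHg⁻¹` iff
`g⁻¹l ∈ N(H)` (i.e. `l` and `g` define the same coset in `G/N(H)`). Hence
`[g] ↦ M^{gHg⁻¹}` is a well-defined injection on cosets with nonempty fixed-point set,
with pairwise disjoint images. -/
theorem fixedPts_conj_disjoint_and_injective {G M : Type*} [Group G] [MulAction G M]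
    (H : Subgroup G) (hH : UniqueMaxStationary M H) :
    (∀ l g : G, (fixedPts M (conjSubgroup l H) ∩ fixedPts M (conjSubgroup g H)).Nonempty →
      conjSubgroup l H = conjSubgroup g H) ∧
    (∀ l g : G, conjSubgroup l H = conjSubgroup g H ↔ g⁻¹ * l ∈ Subgroup.normalizer (H : Set G)) ∧
    (∀ l g : G, (fixedPts M (conjSubgroup l H)).Nonempty →
      (fixedPts M (conjSubgroup l H) = fixedPts M (conjSubgroup g H) ↔
        g⁻¹ * l ∈ Subgroup.normalizer (H : Set G))) := by
  obtain ⟨hfin, hmax⟩ := hH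
  -- key: if x is fixed by conj a H then conj a H equals conj m H whenever both contained
  have key : ∀ a b : G, conjSubgroup a H ≤ conjSubgroup b H →
      conjSubgroup a H = conjSubgroup b H := by
    intro a b hle
    have h1 : conjSubgroup b⁻¹ (conjSubgroup a H) ≤ conjSubgroup b⁻¹ (conjSubgroup b H) :=
      Subgroup.map_mono hle
    rw [conjSubgroup_conjSubgroup, conjSubgroup_conjSubgroup, inv_mul_cancel,
      conjSubgroup_one] at h1
    have h2 := conj_le_self_eq H (b⁻¹ * a) h1
    have := congrArg (conjSubgroup b) h2
    rwa [conjSubgroup_conjSubgroup, show b * (b⁻¹ * a) = a by group] at this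
  have part1 : ∀ l g : G,
      (fixedPts M (conjSubgroup l H) ∩ fixedPts M (conjSubgroup g H)).Nonempty →
      conjSubgroup l H = conjSubgroup g H := by
    intro l g ⟨x, hxl, hxg⟩
    set K := MulAction.stabilizer G x with hK
    have hxK : x ∈ fixedPts M K := fun k hk => hk
    obtain ⟨m, hm⟩ := hmax K ⟨x, hxK⟩
    have hl : conjSubgroup l H ≤ conjSubgroup m H :=
      fun k hk => hm (by simpa [hK, MulAction.mem_stabilizer_iff] using hxl k hk)
    have hg : conjSubgroup g H ≤ conjSubgroup m H :=
      fun k hk => hm (by simpa [hK, MulAction.mem_stabilizer_iff] using hxg k hk)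
    rw [key l m hl, key g m hg]
  have part2 : ∀ l g : G, conjSubgroup l H = conjSubgroup g H ↔ g⁻¹ * l ∈ Subgroup.normalizer (H : Set G) := by
    intro l g
    rw [← conjSubgroup_eq_self_iff]
    constructor
    · intro h
      have := congrArg (conjSubgroup g⁻¹) h
      rwa [conjSubgroup_conjSubgroup, conjSubgroup_conjSubgroup, inv_mul_cancel,
        conjSubgroup_one] at this
    · intro h
      have := congrArg (conjSubgroup g) h
      rwa [conjSubgroup_conjSubgroup, show g * (g⁻¹ * l) = l by group] at this
  refine ⟨part1, part2, ?_⟩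
  intro l g ⟨x, hx⟩
  rw [← part2]
  constructor
  · intro h
    exact part1 l g ⟨x, hx, h ▸ hx⟩
  · intro h
    rw [h]
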